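/- Let x = (x_1,…,x_n) with 0 = x_1 ≤ x_2 ≤ … ≤ x_n (n ≥ 3) be a location of vendors on the circle of circumference 1, with cyclic intervals I_j = [x_j, x_{j+1}] and |Ī| = max_{1≤l≤n} |I_l|. If |I_k| + |I_{k+1}| ≥ |Ī| for all 1 ≤ k ≤ n, then f_k(x) ≥ |Ī|/2 for every vendor k. -/

import Mathlib

noncomputable section

/-- Shortest arc distance on the circle of circumference 1. -/
def circleDist (x y : ℝ) : ℝ := min |x - y + 1| (min |x - y| |x - y - 1|)

open scoped Classical

/-- The set of vendors nearest to the customer at `y`. -/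
def nearest {n : ℕ} (ξ : Fin n → ℝ) (y : ℝ) : Finset (Fin n) :=
  Finset.univ.filter fun j => ∀ i, circleDist (ξ j) y ≤ circleDist (ξ i) y

/-- Density of demand of customer `y` going to vendor `k`. -/
def rho {n : ℕ} (ξ : Fin n → ℝ) (k : Fin n) (y : ℝ) : ℝ :=
  if k ∈ nearest ξ y then (1 : ℝ) / (nearest ξ y).card else 0

/-- Profit of vendor `k`. -/
def profit {n : ℕ} (k : Fin n) (ξ : Fin n → ℝ) : ℝ :=
  ∫ y in (0:ℝ)..1, rho ξ k y

/-- Equilibrium: no vendor can strictly increase profit by unilateral relocation. -/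
def IsEquilibrium {n : ℕ} (x : Fin n → ℝ) : Prop :=
  ∀ k : Fin n, ∀ x' ∈ Set.Icc (0:ℝ) 1,
    profit k (Function.update x k x') ≤ profit k x

/-- Length of the cyclic gap `I_j = [x_j, x_{j+1}]` (for sorted `x` with `x 0 = 0`). -/
def gap {n : ℕ} [NeZero n] (x : Fin n → ℝ) (j : Fin n) : ℝ :=
  (if (j : ℕ) + 1 = n then 1 else 0) + x (j + 1) - x j

/-- The right endpoint of gap `I_j`, unwrapped to the real line. -/
def nextVal {n : ℕ} [NeZero n] (x : Fin n → ℝ) (j : Fin n) : ℝ :=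
  (if (j : ℕ) + 1 = n then 1 else 0) + x (j + 1)

/-- Maximum cyclic gap length `|Ī|`. -/
def maxGap {n : ℕ} [NeZero n] (x : Fin n → ℝ) : ℝ := ⨆ j, gap x j

/-! ### Auxiliary real-number lemmas -/

lemma circleDist_eq_min' {c y : ℝ} (h : |c - y| ≤ 1) :
    circleDist c y = min |c - y| (1 - |c - y|) := by
  unfold circleDist
  rcases abs_le.1 h with ⟨h1, h2⟩
  rcases le_total 0 (c - y) with h3 | h3
  · rw [abs_of_nonneg h3, abs_of_nonneg (by linarith : (0:ℝ) ≤ c - y + 1),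
      abs_of_nonpos (by linarith : c - y - 1 ≤ 0)]
    have e : -(c - y - 1) = 1 - (c - y) := by ring
    rw [e]
    exact min_eq_right (le_trans (min_le_left _ _) (by linarith))
  · rw [abs_of_nonpos h3, abs_of_nonneg (by linarith : (0:ℝ) ≤ c - y + 1),
      abs_of_nonpos (by linarith : c - y - 1 ≤ 0)]
    have e1 : min (-(c - y)) (-(c - y - 1)) = -(c - y) := min_eq_left (by linarith)
    rw [e1, min_comm]
    have e2 : c - y + 1 = 1 - -(c - y) := by ring
    rw [e2]

lemma abs_min_shift' {s v : ℝ} (hs : |s| ≤ 1) (hv : |v| ≤ 1)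
    (h : v = s ∨ v = s + 1 ∨ v = s - 1) :
    min |v| (1 - |v|) = min |s| (1 - |s|) := by
  rcases abs_le.1 hs with ⟨hs1, hs2⟩
  rcases abs_le.1 hv with ⟨hv1, hv2⟩
  rcases h with rfl | rfl | rfl
  · rfl
  · have h1 : s ≤ 0 := by linarith
    rw [abs_of_nonneg (by linarith : (0:ℝ) ≤ s + 1), abs_of_nonpos h1]
    rw [min_comm]; ring_nf
  · have h1 : 0 ≤ s := by linarith
    rw [abs_of_nonpos (by linarith : s - 1 ≤ 0), abs_of_nonneg h1]
    rw [min_comm]; ring_nf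

lemma core_lt' {a b s t u : ℝ} (ha : 0 < a) (hb : 0 < b) (hab : a + b ≤ 1)
    (hs1 : -(a/2) < s) (hs2 : s < b/2)
    (hu : (b ≤ u ∧ u ≤ 1 - a) ∨ (b - 1 ≤ u ∧ u ≤ -a))
    (htu : t = u - s ∨ t = u - s + 1 ∨ t = u - s - 1)
    (ht : |t| ≤ 1) :
    min |s| (1 - |s|) < min |t| (1 - |t|) := by
  refine lt_min (lt_of_le_of_lt (min_le_left _ _) ?_) (lt_of_le_of_lt (min_le_left _ _) ?_) <;>
  · rcases abs_cases s with ⟨hs, hs'⟩ | ⟨hs, hs'⟩ <;>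
      rcases abs_cases t with ⟨ht', ht''⟩ | ⟨ht', ht''⟩ <;>
      rcases hu with ⟨h1, h2⟩ | ⟨h1, h2⟩ <;>
      rcases htu with rfl | rfl | rfl <;>
      linarith

lemma fract_of_neg' {u : ℝ} (h1 : -1 < u) (h2 : u < 0) : Int.fract u = u + 1 := by
  have h3 : Int.fract (u + (1:ℤ)) = Int.fract u := Int.fract_add_intCast u 1
  push_cast at h3
  rw [← h3, Int.fract_eq_self.2 ⟨by linarith, by linarith⟩]

lemma fract_cases' {u : ℝ} (hu1 : -1 ≤ u) (hu2 : u ≤ 1) (h : Int.fract u ≠ 0) :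
    (0 < u ∧ u < 1 ∧ Int.fract u = u) ∨ (-1 < u ∧ u < 0 ∧ Int.fract u = u + 1) := by
  have e0 : u ≠ 0 := by rintro rfl; exact h Int.fract_zero
  have e1 : u ≠ 1 := by rintro rfl; exact h Int.fract_one
  have em1 : u ≠ -1 := by
    rintro rfl
    exact h (by rw [show (-1:ℝ) = ((-1:ℤ):ℝ) by norm_num, Int.fract_intCast])
  rcases lt_or_gt_of_ne e0 with h4 | h4
  · exact Or.inr ⟨lt_of_le_of_ne hu1 (Ne.symm em1), h4,
      fract_of_neg' (lt_of_le_of_ne hu1 (Ne.symm em1)) h4⟩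
  · exact Or.inl ⟨h4, lt_of_le_of_ne hu2 e1,
      Int.fract_eq_self.2 ⟨le_of_lt h4, lt_of_le_of_ne hu2 e1⟩⟩

lemma fract_shift_left' {u v w : ℝ} (h : Int.fract (u - v) = 0) :
    Int.fract (w - u) = Int.fract (w - v) := by
  rw [Int.fract_eq_iff] at h
  obtain ⟨-, -, z, hz⟩ := h
  have e : w - u = (w - v) + ((-z : ℤ) : ℝ) := by push_cast; linarith
  rw [e, Int.fract_add_intCast]

lemma fract_shift_right' {u v w : ℝ} (h : Int.fract (u - v) = 0) :
    Int.fract (u - w) = Int.fract (v - w) := by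
  rw [Int.fract_eq_iff] at h
  obtain ⟨-, -, z, hz⟩ := h
  have e : u - w = (v - w) + ((z : ℤ) : ℝ) := by linarith
  rw [e, Int.fract_add_intCast]

/-! ### Fin helpers -/

lemma val_one_fin' {n : ℕ} [NeZero n] (hn : 3 ≤ n) : ((1 : Fin n) : ℕ) = 1 := by
  rw [Fin.val_one']; exact Nat.mod_eq_of_lt (by omega)

lemma val_add_one_fin' {n : ℕ} [NeZero n] (hn : 3 ≤ n) (k : Fin n) (h : (k : ℕ) + 1 < n) :
    ((k + 1 : Fin n) : ℕ) = (k : ℕ) + 1 := by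
  rw [Fin.add_def]; simp only [val_one_fin' hn]; exact Nat.mod_eq_of_lt h

lemma add_one_eq_zero_fin' {n : ℕ} [NeZero n] (hn : 3 ≤ n) (k : Fin n) (h : (k : ℕ) + 1 = n) :
    k + 1 = 0 := by
  apply Fin.ext; rw [Fin.add_def]
  simp only [val_one_fin' hn, Fin.val_zero, h, Nat.mod_self]

/-! ### Gap helpers -/

section GapHelp
variable {n : ℕ} [NeZero n] {x : Fin n → ℝ}

lemma x_nonneg' (hx0 : x 0 = 0) (hmono : Monotone x) (i : Fin n) : 0 ≤ x i := by
  rw [← hx0]; exact hmono (Fin.zero_le i)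

lemma gap_nonneg' (hn : 3 ≤ n) (hx0 : x 0 = 0) (hmono : Monotone x) (hx1 : ∀ j, x j ≤ 1)
    (j : Fin n) : 0 ≤ gap x j := by
  unfold gap
  by_cases h : (j : ℕ) + 1 = n
  · rw [if_pos h, add_one_eq_zero_fin' hn j h, hx0]
    have := hx1 j; linarith
  · rw [if_neg h]
    have hj : (j : ℕ) + 1 < n := Nat.lt_of_le_of_ne (Nat.succ_le_of_lt j.isLt) h
    have hle : j ≤ j + 1 := by
      rw [Fin.le_def, val_add_one_fin' hn j hj]; omega
    have := hmono hle; linarith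

lemma maxGap_ge' (j : Fin n) : gap x j ≤ maxGap x := by
  have : Nonempty (Fin n) := ⟨j⟩
  exact le_ciSup (Set.Finite.bddAbove (Set.finite_range _)) j

lemma x_eq_zero_of_gaps' (hn : 3 ≤ n) (hx0 : x 0 = 0)
    (hg : ∀ j : Fin n, gap x j ≤ 0) (hmono : Monotone x) (hx1 : ∀ j, x j ≤ 1) :
    ∀ m (h : m < n), x ⟨m, h⟩ = 0 := by
  intro m
  induction m with
  | zero => intro h; exact hx0
  | succ m ih =>
    intro h
    have hm : m < n := by omega
    have e : (⟨m, hm⟩ : Fin n) + 1 = ⟨m + 1, h⟩ := by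
      apply Fin.ext
      rw [val_add_one_fin' hn ⟨m, hm⟩ (by simpa using h)]
    have h1 := hg ⟨m, hm⟩
    have h2 := gap_nonneg' hn hx0 hmono hx1 ⟨m, hm⟩
    have h3 : gap x ⟨m, hm⟩ = 0 := le_antisymm h1 h2
    unfold gap at h3
    rw [if_neg (by simp; omega), e] at h3
    have := ih hm
    linarith

lemma maxGap_pos' (hn : 3 ≤ n) (hx0 : x 0 = 0) (hmono : Monotone x) (hx1 : ∀ j, x j ≤ 1) :
    0 < maxGap x := by
  by_contra hc
  push_neg at hc
  have hg : ∀ j : Fin n, gap x j ≤ 0 := fun j => le_trans (maxGap_ge' j) hc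
  have hlast := hg ⟨n - 1, by omega⟩
  have h0 : gap x ⟨n - 1, by omega⟩ = 1 + x 0 - x ⟨n - 1, by omega⟩ := by
    unfold gap
    rw [if_pos (by simp; omega)]
    rw [add_one_eq_zero_fin' hn _ (by simp; omega)]
  have := x_eq_zero_of_gaps' hn hx0 hg hmono hx1 (n - 1) (by omega)
  rw [h0, hx0, this] at hlast
  linarith

lemma b_ge' (hn : 3 ≤ n) (hx0 : x 0 = 0) (hmono : Monotone x) (hx1 : ∀ j, x j ≤ 1)
    (k i : Fin n) (hi : Int.fract (x i - x k) ≠ 0) :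
    gap x k ≤ Int.fract (x i - x k) := by
  have hxi0 := x_nonneg' hx0 hmono i
  have hxk0 := x_nonneg' hx0 hmono k
  have hb := fract_cases' (by have := hx1 k; linarith) (by have := hx1 i; linarith) hi
  unfold gap
  by_cases hk : (k : ℕ) + 1 = n
  · rw [if_pos hk, add_one_eq_zero_fin' hn k hk, hx0]
    have hik : i ≤ k := by rw [Fin.le_def]; omega
    have := hmono hik
    rcases hb with ⟨h1, h2, h3⟩ | ⟨h1, h2, h3⟩
    · linarith
    · rw [h3]; linarith
  · rw [if_neg hk]
    have hk1 : (k : ℕ) + 1 < n := Nat.lt_of_le_of_ne (Nat.succ_le_of_lt k.isLt) hk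
    have hksucc : ((k + 1 : Fin n) : ℕ) = (k : ℕ) + 1 := val_add_one_fin' hn k hk1
    rcases hb with ⟨h1, h2, h3⟩ | ⟨h1, h2, h3⟩
    · rw [h3]
      have hXle : x (k + 1) ≤ x i := by
        by_contra hc
        push_neg at hc
        have hik : (i : ℕ) ≤ (k : ℕ) := by
          by_contra hc2
          push_neg at hc2
          have hle : k + 1 ≤ i := by rw [Fin.le_def, hksucc]; omega
          have := hmono hle
          linarith
        have : x i ≤ x k := hmono (by rw [Fin.le_def]; omega)
        linarith
      linarith
    · rw [h3]
      have := hx1 (k + 1)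
      linarith

lemma a_ge' (hn : 3 ≤ n) (hx0 : x 0 = 0) (hmono : Monotone x) (hx1 : ∀ j, x j ≤ 1)
    (j i : Fin n) (hi : Int.fract (x i - x (j + 1)) ≠ 0) :
    gap x j ≤ Int.fract (x (j + 1) - x i) := by
  have hxi0 := x_nonneg' hx0 hmono i
  have hxj0 := x_nonneg' hx0 hmono j
  have hxk0 := x_nonneg' hx0 hmono (j + 1)
  have hi' : Int.fract (x (j + 1) - x i) ≠ 0 := by
    intro hc
    apply hi
    rw [← Int.fract_neg_eq_zero] at hc
    simpa using hc
  have hb := fract_cases' (by have := hx1 i; linarith) (by have := hx1 (j + 1); linarith) hi'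
  unfold gap
  by_cases hj : (j : ℕ) + 1 = n
  · have hz : j + 1 = 0 := add_one_eq_zero_fin' hn j hj
    rw [if_pos hj, hz, hx0]
    rw [hz, hx0] at hb
    have hij : i ≤ j := by rw [Fin.le_def]; omega
    have := hmono hij
    rcases hb with ⟨h1, h2, h3⟩ | ⟨h1, h2, h3⟩
    · linarith
    · rw [h3]; linarith
  · rw [if_neg hj]
    have hj1 : (j : ℕ) + 1 < n := Nat.lt_of_le_of_ne (Nat.succ_le_of_lt j.isLt) hj
    have hjsucc : ((j + 1 : Fin n) : ℕ) = (j : ℕ) + 1 := val_add_one_fin' hn j hj1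
    rcases hb with ⟨h1, h2, h3⟩ | ⟨h1, h2, h3⟩
    · rw [h3]
      have hXle : x i ≤ x j := by
        by_contra hc
        push_neg at hc
        have hik : (j : ℕ) + 1 ≤ (i : ℕ) := by
          by_contra hc2
          push_neg at hc2
          have : x i ≤ x j := hmono (by rw [Fin.le_def]; omega)
          linarith
        have : x (j + 1) ≤ x i := hmono (by rw [Fin.le_def, hjsucc]; omega)
        linarith
      linarith
    · rw [h3]
      have := hx1 i
      linarith

end GapHelp

/-! ### Measurability and integration helpers -/

section Meas
variable {n : ℕ} (x : Fin n → ℝ) (k : Fin n)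

lemma measurable_circleDist' (c : ℝ) : Measurable fun y => circleDist c y := by
  unfold circleDist; fun_prop

lemma measurableSet_mem_nearest' (j : Fin n) :
    MeasurableSet {y : ℝ | j ∈ nearest x y} := by
  have e : {y : ℝ | j ∈ nearest x y}
      = ⋂ i, {y : ℝ | circleDist (x j) y ≤ circleDist (x i) y} := by
    ext y; simp [nearest]
  rw [e]
  exact MeasurableSet.iInter fun i =>
    measurableSet_le (measurable_circleDist' _) (measurable_circleDist' _)

lemma measurableSet_nearest_eq' (S : Finset (Fin n)) :
    MeasurableSet {y : ℝ | nearest x y = S} := by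
  have e : {y : ℝ | nearest x y = S} = ⋂ j, {y : ℝ | j ∈ nearest x y ↔ j ∈ S} := by
    ext y
    simp only [Set.mem_iInter, Set.mem_setOf_eq, Finset.ext_iff]
  rw [e]
  refine MeasurableSet.iInter fun j => ?_
  by_cases hj : j ∈ S
  · simp only [hj, iff_true]
    exact measurableSet_mem_nearest' x j
  · simp only [hj, iff_false]
    exact (measurableSet_mem_nearest' x j).compl

lemma measurable_rho' : Measurable (rho x k) := by
  have hdecomp : rho x k = fun y => ∑ S : Finset (Fin n),
      Set.indicator {y : ℝ | nearest x y = S}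
        (fun _ => if k ∈ S then (1:ℝ)/S.card else 0) y := by
    funext y
    rw [Finset.sum_eq_single (nearest x y)]
    · rw [Set.indicator_of_mem (by simp : y ∈ {y' : ℝ | nearest x y' = nearest x y})]
      rfl
    · intro S _ hS
      exact Set.indicator_of_notMem (fun h => hS (Set.mem_setOf_eq ▸ h).symm) _
    · intro h; exact absurd (Finset.mem_univ _) h
  rw [hdecomp]
  exact Finset.measurable_sum _ fun S _ =>
    Measurable.indicator measurable_const (measurableSet_nearest_eq' x S)

lemma rho_nonneg' (y : ℝ) : 0 ≤ rho x k y := by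
  unfold rho; split
  · positivity
  · exact le_refl 0

lemma rho_le_one' (y : ℝ) : rho x k y ≤ 1 := by
  unfold rho; split
  · rename_i h
    have hc : 0 < (nearest x y).card := Finset.card_pos.2 ⟨k, h⟩
    rw [div_le_one (by exact_mod_cast hc)]
    exact_mod_cast hc
  · norm_num

lemma integrableOn_rho' {u v : ℝ} : MeasureTheory.IntegrableOn (rho x k) (Set.Ioc u v) := by
  refine MeasureTheory.Integrable.mono'
    ((MeasureTheory.integrableOn_const_iff (C := (1:ℝ))).2 (Or.inr measure_Ioc_lt_top))
    (measurable_rho' x k).aestronglyMeasurable ?_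
  refine Filter.Eventually.of_forall fun y => ?_
  rw [Real.norm_eq_abs, abs_of_nonneg (rho_nonneg' x k y)]
  exact rho_le_one' x k y

lemma integral_piece' {u v c d : ℝ} (hc : u ≤ c) (hd : d ≤ v) (m : ℕ) (hm : 1 ≤ m)
    (hpt : ∀ y ∈ Set.Ioo c d, (1:ℝ)/m ≤ rho x k y) :
    (d - c)/m ≤ ∫ y in Set.Ioc u v, rho x k y := by
  have hm0 : (0:ℝ) < m := by exact_mod_cast hm
  rcases le_or_gt d c with hdc | hdc
  · refine le_trans (div_nonpos_of_nonpos_of_nonneg (by linarith) hm0.le) ?_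
    exact MeasureTheory.setIntegral_nonneg measurableSet_Ioc fun y _ => rho_nonneg' x k y
  · have hsub : Set.Ioo c d ⊆ Set.Ioc u v := fun y hy =>
      ⟨lt_of_le_of_lt hc hy.1, le_trans (le_of_lt hy.2) hd⟩
    have hint := integrableOn_rho' x k (u := u) (v := v)
    have step1 : ∫ y in Set.Ioo c d, rho x k y ≤ ∫ y in Set.Ioc u v, rho x k y := by
      refine MeasureTheory.setIntegral_mono_set hint ?_ hsub.eventuallyLE
      exact Filter.Eventually.of_forall fun y => rho_nonneg' x k y
    have step2 : (d - c)/m ≤ ∫ y in Set.Ioo c d, rho x k y := by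
      have hconst : ∫ _y in Set.Ioo c d, (1:ℝ)/m = (d - c) * ((1:ℝ)/m) := by
        rw [MeasureTheory.setIntegral_const, MeasureTheory.measureReal_def, Real.volume_Ioo, smul_eq_mul,
          ENNReal.toReal_ofReal (by linarith)]
      have hmono := MeasureTheory.setIntegral_mono_on
        ((MeasureTheory.integrableOn_const_iff (C := (1:ℝ)/m)).2 (Or.inr measure_Ioo_lt_top))
        (hint.mono_set hsub) measurableSet_Ioo hpt
      rw [hconst] at hmono
      calc (d - c)/m = (d - c) * (1/m) := by ring
        _ ≤ _ := hmono
    linarith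

end Meas

theorem profit_lower_bound_of_gap_condition {n : ℕ} [NeZero n] (hn : 3 ≤ n)
    (x : Fin n → ℝ) (hx0 : x 0 = 0) (hmono : Monotone x) (hx1 : ∀ j, x j ≤ 1)
    (hcond : ∀ k : Fin n, maxGap x ≤ gap x k + gap x (k + 1)) :
    ∀ k : Fin n, maxGap x / 2 ≤ profit k x := by
  intro k
  have hgapnn : ∀ j, 0 ≤ gap x j := gap_nonneg' hn hx0 hmono hx1
  have hMpos : 0 < maxGap x := maxGap_pos' hn hx0 hmono hx1
  have hrange : ∀ i : Fin n, 0 ≤ x i ∧ x i ≤ 1 := fun i => ⟨x_nonneg' hx0 hmono i, hx1 i⟩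
  classical
  set C : Finset (Fin n) := Finset.univ.filter (fun i => Int.fract (x i - x k) = 0) with hC
  have hmemC : ∀ i, i ∈ C ↔ Int.fract (x i - x k) = 0 := by intro i; simp [hC]
  have hkC : k ∈ C := (hmemC k).2 (by simp)
  have hCval : ∀ i ∈ C, x i = x k ∨ (x i = 0 ∧ x k = 1) ∨ (x i = 1 ∧ x k = 0) := by
    intro i hi
    have h0 := (hmemC i).1 hi
    rw [Int.fract_eq_iff] at h0
    obtain ⟨-, -, z, hz⟩ := h0
    have hz1 : (z:ℝ) ≤ 1 := by
      rw [← hz]; have := (hrange i).2; have := (hrange k).1; linarith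
    have hz2 : (-1:ℝ) ≤ (z:ℝ) := by
      rw [← hz]; have := (hrange i).1; have := (hrange k).2; linarith
    have hz1' : z ≤ 1 := by exact_mod_cast hz1
    have hz2' : (-1:ℤ) ≤ z := by exact_mod_cast hz2
    have hri1 := (hrange i).1; have hri2 := (hrange i).2
    have hrk1 := (hrange k).1; have hrk2 := (hrange k).2
    interval_cases z
    · push_cast at hz
      right; left; constructor <;> linarith
    · push_cast at hz
      left; linarith
    · push_cast at hz
      right; right; constructor <;> linarith
  have hconsec : ∀ j : Fin n, ¬(gap x j = 0 ∧ gap x (j + 1) = 0) := by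
    rintro j ⟨h1, h2⟩
    have := hcond j
    rw [h1, h2] at this
    linarith
  have hfar : ∀ i l : Fin n, (i:ℕ) + 2 ≤ (l:ℕ) → x i = x l → False := by
    intro i l hil hxil
    have hln := l.isLt
    have hi1 : (i:ℕ) + 1 < n := by omega
    have hv1 : ((i + 1 : Fin n):ℕ) = (i:ℕ) + 1 := val_add_one_fin' hn i hi1
    have hv2 : ((i + 1 + 1 : Fin n):ℕ) = (i:ℕ) + 2 := by
      rw [val_add_one_fin' hn (i+1) (by omega), hv1]
    have e1 : x i ≤ x (i+1) := hmono (by rw [Fin.le_def, hv1]; omega)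
    have e2 : x (i+1) ≤ x (i+1+1) := hmono (by rw [Fin.le_def, hv1, hv2]; omega)
    have e3 : x (i+1+1) ≤ x l := hmono (by rw [Fin.le_def, hv2]; omega)
    apply hconsec i
    constructor
    · unfold gap; rw [if_neg (by omega)]; linarith
    · unfold gap; rw [if_neg (by rw [hv1]; omega)]; linarith
  have heq_case : ∀ i l : Fin n, x i = x l → i ≠ l →
      (l = i + 1 ∧ gap x i = 0) ∨ (i = l + 1 ∧ gap x l = 0) := by
    intro i l hxe hne
    have hvne : (i:ℕ) ≠ (l:ℕ) := fun h => hne (Fin.ext h)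
    have hli := l.isLt; have hii := i.isLt
    rcases Nat.lt_or_ge (i:ℕ) (l:ℕ) with h | h
    · have hl1 : (l:ℕ) = (i:ℕ) + 1 := by
        by_contra hc
        exact hfar i l (by omega) hxe
      left
      have hlv : l = i + 1 := Fin.ext (by rw [val_add_one_fin' hn i (by omega)]; omega)
      refine ⟨hlv, ?_⟩
      unfold gap; rw [if_neg (by omega), ← hlv]; linarith
    · have hl1 : (i:ℕ) = (l:ℕ) + 1 := by
        by_contra hc
        exact hfar l i (by omega) hxe.symm
      right
      have hlv : i = l + 1 := Fin.ext (by rw [val_add_one_fin' hn l (by omega)]; omega)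
      refine ⟨hlv, ?_⟩
      unfold gap; rw [if_neg (by omega), ← hlv]; linarith
  have hmix : ∀ i l : Fin n, x i = 0 → x l = 1 → (i:ℕ) = 0 ∧ (l:ℕ) = n - 1 := by
    intro i l hxi hxl
    have hli := l.isLt; have hii := i.isLt
    have hlstlt : n - 1 < n := by omega
    set lst : Fin n := ⟨n-1, hlstlt⟩ with hlst
    have hlstv : (lst:ℕ) = n - 1 := rfl
    have hxlst : x lst = 1 :=
      le_antisymm (hx1 lst) (by rw [← hxl]; exact hmono (by rw [Fin.le_def, hlstv]; omega))
    have hlast_add : lst + 1 = 0 := add_one_eq_zero_fin' hn lst (by rw [hlstv]; omega)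
    have hgaplast : gap x lst = 0 := by
      unfold gap; rw [if_pos (by rw [hlstv]; omega), hlast_add, hx0, hxlst]; ring
    have hlval : (l:ℕ) = n - 1 := by
      by_contra hc
      rcases Nat.lt_or_ge ((l:ℕ) + 2) n with h2 | h2
      · exact hfar l lst (by rw [hlstv]; omega) (by rw [hxl, hxlst])
      · have hlv : (l:ℕ) = n - 2 := by omega
        have hl1 : l + 1 = lst := Fin.ext (by rw [val_add_one_fin' hn l (by omega), hlstv]; omega)
        apply hconsec l
        constructor
        · unfold gap; rw [if_neg (by omega), hl1, hxlst, hxl]; ring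
        · rw [hl1]; exact hgaplast
    refine ⟨?_, hlval⟩
    by_contra hc
    have hx0i : x 0 = x i := by rw [hx0, hxi]
    rcases Nat.lt_or_ge 1 (i:ℕ) with h2 | h2
    · exact hfar 0 i (by simp; omega) hx0i
    · have hiv : (i:ℕ) = 1 := by omega
      have h01 : (0:Fin n) + 1 = i := Fin.ext (by rw [val_add_one_fin' hn 0 (by simp; omega)]; simp; omega)
      apply hconsec lst
      refine ⟨hgaplast, ?_⟩
      rw [hlast_add]
      unfold gap; rw [if_neg (by simp; omega), h01, hxi, hx0]; ring
  have hM1 : ∀ i l : Fin n, x i = 0 → x l = 1 → (i = l + 1 ∧ gap x l = 0) := by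
    intro i l h0 h1'
    obtain ⟨hiv, hlv⟩ := hmix i l h0 h1'
    have hl1 : l + 1 = 0 := add_one_eq_zero_fin' hn l (by omega)
    constructor
    · rw [hl1]; exact Fin.ext (by simp [hiv])
    · unfold gap; rw [if_pos (by omega), hl1, hx0, h1']; ring
  have hpair : ∀ i ∈ C, ∀ l ∈ C, i ≠ l →
      (l = i + 1 ∧ gap x i = 0) ∨ (i = l + 1 ∧ gap x l = 0) := by
    intro i hi l hl hne
    rcases hCval i hi with hvi | ⟨hvi1, hvi2⟩ | ⟨hvi1, hvi2⟩ <;>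
      rcases hCval l hl with hvl | ⟨hvl1, hvl2⟩ | ⟨hvl1, hvl2⟩
    · exact heq_case i l (by rw [hvi, hvl]) hne
    · -- x i = x k = 1, x l = 0
      exact Or.inl ⟨(hM1 l i hvl1 (by rw [hvi, hvl2])).1, (hM1 l i hvl1 (by rw [hvi, hvl2])).2⟩
    · -- x i = x k = 0, x l = 1
      exact Or.inr (hM1 i l (by rw [hvi, hvl2]) hvl1)
    · -- x i = 0 (x k = 1), x l = x k = 1
      exact Or.inr (hM1 i l hvi1 (by rw [hvl, hvi2]))
    · exact heq_case i l (by rw [hvi1, hvl1]) hne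
    · exfalso; rw [hvi2] at hvl2; exact one_ne_zero hvl2
    · -- x i = 1 (x k = 0), x l = x k = 0
      exact Or.inl (hM1 l i (by rw [hvl, hvi2]) hvi1)
    · exfalso; rw [hvi2] at hvl2; exact zero_ne_one hvl2
    · exact heq_case i l (by rw [hvi1, hvl1]) hne
  have hcard2 : C.card ≤ 2 := by
    by_contra hcc
    push_neg at hcc
    obtain ⟨a1, b1, c1, ha1, hb1, hc1, hab1, hac1, hbc1⟩ := Finset.two_lt_card_iff.1 hcc
    rcases hpair a1 ha1 b1 hb1 hab1 with ⟨h1, g1⟩ | ⟨h1, g1⟩ <;>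
      rcases hpair a1 ha1 c1 hc1 hac1 with ⟨h2, g2⟩ | ⟨h2, g2⟩
    · exact hbc1 (h1.trans h2.symm)
    · exact hconsec c1 ⟨g2, by rw [← h2]; exact g1⟩
    · exact hconsec b1 ⟨g1, by rw [← h1]; exact g2⟩
    · exact hbc1 (add_right_cancel (h1.symm.trans h2))
  have hcard1 : 0 < C.card := Finset.card_pos.2 ⟨k, hkC⟩
  have hCcne : (Cᶜ : Finset (Fin n)).Nonempty := by
    rw [← Finset.card_pos, Finset.card_compl, Fintype.card_fin]
    omega
  set aL := (Cᶜ).inf' hCcne (fun i => Int.fract (x k - x i)) with haL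
  set bL := (Cᶜ).inf' hCcne (fun i => Int.fract (x i - x k)) with hbL
  have hfne : ∀ i ∈ (Cᶜ : Finset (Fin n)), Int.fract (x i - x k) ≠ 0 := by
    intro i hi h
    exact (Finset.mem_compl.1 hi) ((hmemC i).2 h)
  have hfne' : ∀ i ∈ (Cᶜ : Finset (Fin n)), Int.fract (x k - x i) ≠ 0 := by
    intro i hi h
    apply hfne i hi
    rw [← Int.fract_neg_eq_zero]
    simpa [neg_sub] using h
  have hbpos : 0 < bL := by
    obtain ⟨i, hi, he⟩ := Finset.exists_mem_eq_inf' hCcne (fun i => Int.fract (x i - x k))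
    rw [hbL, he]
    exact lt_of_le_of_ne (Int.fract_nonneg _) (Ne.symm (hfne i hi))
  have hapos : 0 < aL := by
    obtain ⟨i, hi, he⟩ := Finset.exists_mem_eq_inf' hCcne (fun i => Int.fract (x k - x i))
    rw [haL, he]
    exact lt_of_le_of_ne (Int.fract_nonneg _) (Ne.symm (hfne' i hi))
  have hab1 : aL + bL ≤ 1 := by
    obtain ⟨i, hi, he⟩ := Finset.exists_mem_eq_inf' hCcne (fun i => Int.fract (x i - x k))
    have h1 : aL ≤ Int.fract (x k - x i) := Finset.inf'_le _ hi
    have h2 : Int.fract (x k - x i) = 1 - Int.fract (x i - x k) := by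
      rw [← neg_sub (x i) (x k), Int.fract_neg (hfne i hi)]
    rw [hbL, he]
    linarith
  have hble : ∀ i ∈ (Cᶜ : Finset (Fin n)), bL ≤ Int.fract (x i - x k) :=
    fun i hi => Finset.inf'_le _ hi
  have hale : ∀ i ∈ (Cᶜ : Finset (Fin n)), aL ≤ Int.fract (x k - x i) :=
    fun i hi => Finset.inf'_le _ hi
  have hb_gapk : gap x k ≤ bL :=
    Finset.le_inf' hCcne _ (fun i hi => b_ge' hn hx0 hmono hx1 k i (hfne i hi))
  have hb_shift : ∀ j ∈ C, gap x j ≤ bL := by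
    intro j hjC
    refine Finset.le_inf' hCcne _ (fun i hi => ?_)
    have hsh : Int.fract (x i - x j) = Int.fract (x i - x k) := fract_shift_left' ((hmemC j).1 hjC)
    rw [← hsh]
    exact b_ge' hn hx0 hmono hx1 j i (by rw [hsh]; exact hfne i hi)
  have ha_shift : ∀ j : Fin n, (j + 1) ∈ C → gap x j ≤ aL := by
    intro j hjC
    refine Finset.le_inf' hCcne _ (fun i hi => ?_)
    have hsh1 : Int.fract (x (j+1) - x i) = Int.fract (x k - x i) :=
      fract_shift_right' ((hmemC _).1 hjC)
    have hsh2 : Int.fract (x i - x (j+1)) = Int.fract (x i - x k) :=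
      fract_shift_left' ((hmemC _).1 hjC)
    rw [← hsh1]
    exact a_ge' hn hx0 hmono hx1 j i (by rw [hsh2]; exact hfne i hi)
  have hk1 : k - 1 + 1 = k := sub_add_cancel k 1
  have hak : gap x (k - 1) ≤ aL := ha_shift (k-1) (by rw [hk1]; exact hkC)
  have hmb : (C.card : ℝ) * maxGap x ≤ aL + bL := by
    rcases (by omega : C.card = 1 ∨ C.card = 2) with hcc | hcc
    · rw [hcc]
      have hcnd := hcond (k - 1)
      rw [hk1] at hcnd
      push_cast
      linarith [hb_gapk]
    · obtain ⟨j, hjC, hjk⟩ := Finset.exists_mem_ne (by omega : 1 < C.card) k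
      rcases hpair k hkC j hjC (Ne.symm hjk) with ⟨hj1, hg0⟩ | ⟨hj1, hg0⟩
      · have hbk1 : gap x (k+1) ≤ bL := hb_shift (k+1) (hj1 ▸ hjC)
        have h1 := hcond k
        rw [hg0] at h1
        have h2 := hcond (k-1)
        rw [hk1, hg0] at h2
        rw [hcc]; push_cast; linarith [hak, hbk1]
      · have hjs : j - 1 + 1 = j := sub_add_cancel j 1
        have haj : gap x (j-1) ≤ aL := ha_shift (j-1) (by rw [hjs]; exact hjC)
        have h2 := hcond (j-1)
        rw [hjs, hg0] at h2
        have h1 := hcond j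
        rw [hg0, ← hj1] at h1
        rw [hcc]; push_cast; linarith [hb_gapk, haj]
  have hcardR : (0:ℝ) < C.card := by exact_mod_cast hcard1
  have hpt : ∀ y s : ℝ, 0 ≤ y → y ≤ 1 →
      (y - x k = s ∨ y - x k = s + 1 ∨ y - x k = s - 1) →
      -(aL/2) < s → s < bL/2 → (1:ℝ)/(C.card) ≤ rho x k y := by
    intro y s hy0 hy1 hys hs1 hs2
    have habs : ∀ i : Fin n, |x i - y| ≤ 1 := fun i =>
      abs_le.2 ⟨by have := (hrange i).1; linarith, by have := (hrange i).2; linarith⟩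
    have habs' : |x k - y| ≤ 1 := habs k
    have hsabs : |s| ≤ 1 := abs_le.2 ⟨by linarith, by linarith⟩
    have hpy : circleDist (x k) y = min |s| (1 - |s|) := by
      rw [circleDist_eq_min' habs']
      have hv : x k - y = -s ∨ x k - y = -s + 1 ∨ x k - y = -s - 1 := by
        rcases hys with h | h | h
        · left; linarith
        · right; right; linarith
        · right; left; linarith
      have := abs_min_shift' (s := -s) (by rwa [abs_neg]) habs' hv
      rwa [abs_neg] at this
    have hCd : ∀ i ∈ C, circleDist (x i) y = circleDist (x k) y := by
      intro i hi
      rw [circleDist_eq_min' (habs i), circleDist_eq_min' habs']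
      refine abs_min_shift' habs' (habs i) ?_
      rcases hCval i hi with hv | ⟨hv1, hv2⟩ | ⟨hv1, hv2⟩
      · left; rw [hv]
      · right; right; rw [hv1, hv2]; ring
      · right; left; rw [hv1, hv2]; ring
    have hCd_lt : ∀ i, i ∉ C → circleDist (x k) y < circleDist (x i) y := by
      intro i hiC
      have hicc : i ∈ (Cᶜ : Finset (Fin n)) := Finset.mem_compl.2 hiC
      have hfr := hfne i hicc
      have hfc := fract_cases' (u := x i - x k)
        (by have := (hrange i).1; have := (hrange k).2; linarith)
        (by have := (hrange i).2; have := (hrange k).1; linarith) hfr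
      have hneg : Int.fract (x k - x i) = 1 - Int.fract (x i - x k) := by
        rw [← neg_sub (x i) (x k), Int.fract_neg hfr]
      have hb1 := hble i hicc
      have ha1 := hale i hicc
      have hu : (bL ≤ x i - x k ∧ x i - x k ≤ 1 - aL) ∨
          (bL - 1 ≤ x i - x k ∧ x i - x k ≤ -aL) := by
        rcases hfc with ⟨h1, h2, h3⟩ | ⟨h1, h2, h3⟩
        · rw [h3] at hb1
          rw [hneg, h3] at ha1
          exact Or.inl ⟨hb1, by linarith⟩
        · rw [h3] at hb1
          rw [hneg, h3] at ha1
          exact Or.inr ⟨by linarith, by linarith⟩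
      rw [hpy, circleDist_eq_min' (habs i)]
      refine core_lt' hapos hbpos hab1 hs1 hs2 hu ?_ (habs i)
      rcases hys with h | h | h
      · left; linarith
      · right; right; linarith
      · right; left; linarith
    have hknear : k ∈ nearest x y := by
      rw [nearest, Finset.mem_filter]
      refine ⟨Finset.mem_univ k, fun i => ?_⟩
      by_cases hiC : i ∈ C
      · rw [hCd i hiC]
      · exact le_of_lt (hCd_lt i hiC)
    have hsubn : nearest x y ⊆ C := by
      intro i hi
      by_contra hiC
      rw [nearest, Finset.mem_filter] at hi
      have h1 := hi.2 k
      have h2 := hCd_lt i hiC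
      linarith
    rw [rho, if_pos hknear]
    have hc1 : 0 < (nearest x y).card := Finset.card_pos.2 ⟨k, hknear⟩
    have hc2 : (nearest x y).card ≤ C.card := Finset.card_le_card hsubn
    apply one_div_le_one_div_of_le
    · exact_mod_cast hc1
    · exact_mod_cast hc2
  have hprofit : profit k x = ∫ y in Set.Ioc (0:ℝ) 1, rho x k y := by
    rw [profit]; exact intervalIntegral.integral_of_le zero_le_one
  have hp0 : 0 ≤ x k := (hrange k).1
  have hp1 : x k ≤ 1 := (hrange k).2
  have hdisj : Disjoint (Set.Ioc (0:ℝ) (1/2)) (Set.Ioc (1/2:ℝ) 1) := by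
    apply Set.disjoint_left.mpr
    rintro y ⟨_, h1⟩ ⟨h2, _⟩
    exact absurd h2 (not_lt.2 h1)
  have hsplit : ∫ y in Set.Ioc (0:ℝ) 1, rho x k y =
      (∫ y in Set.Ioc (0:ℝ) (1/2), rho x k y) + ∫ y in Set.Ioc (1/2:ℝ) 1, rho x k y := by
    rw [← Set.Ioc_union_Ioc_eq_Ioc (show (0:ℝ) ≤ 1/2 by norm_num) (show (1/2:ℝ) ≤ 1 by norm_num)]
    exact MeasureTheory.setIntegral_union hdisj measurableSet_Ioc
      (integrableOn_rho' x k) (integrableOn_rho' x k)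
  have htarget : ((aL + bL)/2) / C.card ≤ ∫ y in Set.Ioc (0:ℝ) 1, rho x k y := by
    rcases le_or_gt 0 (x k - aL/2) with hl0 | hl0
    · rcases le_or_gt (x k + bL/2) 1 with hr1 | hr1
      · -- no wrap
        have hseg : ((x k + bL/2) - (x k - aL/2))/(C.card : ℝ) ≤
            ∫ y in Set.Ioc (0:ℝ) 1, rho x k y := by
          refine integral_piece' x k hl0 hr1 C.card (by omega) ?_
          intro y hy
          exact hpt y (y - x k) (by linarith [hy.1]) (by linarith [hy.2]) (Or.inl rfl)
            (by linarith [hy.1]) (by linarith [hy.2])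
        have he : ((aL + bL)/2) / (C.card:ℝ) = ((x k + bL/2) - (x k - aL/2))/(C.card : ℝ) := by
          ring_nf
        rw [he]; exact hseg
      · -- wrap right
        have hl12 : (1:ℝ)/2 ≤ x k - aL/2 := by linarith
        have hseg1 : ((1:ℝ) - (x k - aL/2))/(C.card : ℝ) ≤
            ∫ y in Set.Ioc (1/2:ℝ) 1, rho x k y := by
          refine integral_piece' x k hl12 le_rfl C.card (by omega) ?_
          intro y hy
          exact hpt y (y - x k) (by linarith [hy.1]) (by linarith [hy.2]) (Or.inl rfl)
            (by linarith [hy.1]) (by linarith [hy.2])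
        have hseg2 : ((x k + bL/2 - 1) - 0)/(C.card : ℝ) ≤
            ∫ y in Set.Ioc (0:ℝ) (1/2), rho x k y := by
          refine integral_piece' x k le_rfl (by linarith) C.card (by omega) ?_
          intro y hy
          exact hpt y (y - x k + 1) (by linarith [hy.1]) (by linarith [hy.2])
            (Or.inr (Or.inr (by ring))) (by linarith [hy.1]) (by linarith [hy.2])
        rw [hsplit]
        have he : ((aL + bL)/2) / (C.card:ℝ) =
            ((x k + bL/2 - 1) - 0)/(C.card : ℝ) + ((1:ℝ) - (x k - aL/2))/(C.card : ℝ) := by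
          rw [← add_div]; ring_nf
        rw [he]
        exact add_le_add hseg2 hseg1
    · -- wrap left
      have hr12 : x k + bL/2 ≤ 1/2 := by linarith
      have hl12 : (1:ℝ)/2 ≤ (x k - aL/2) + 1 := by linarith
      have hseg1 : ((x k + bL/2) - 0)/(C.card : ℝ) ≤
          ∫ y in Set.Ioc (0:ℝ) (1/2), rho x k y := by
        refine integral_piece' x k le_rfl hr12 C.card (by omega) ?_
        intro y hy
        exact hpt y (y - x k) (by linarith [hy.1]) (by linarith [hy.2]) (Or.inl rfl)
          (by linarith [hy.1]) (by linarith [hy.2])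
      have hseg2 : ((1:ℝ) - ((x k - aL/2) + 1))/(C.card : ℝ) ≤
          ∫ y in Set.Ioc (1/2:ℝ) 1, rho x k y := by
        refine integral_piece' x k hl12 le_rfl C.card (by omega) ?_
        intro y hy
        exact hpt y (y - x k - 1) (by linarith [hy.1]) (by linarith [hy.2])
          (Or.inr (Or.inl (by ring))) (by linarith [hy.1]) (by linarith [hy.2])
      rw [hsplit]
      have he : ((aL + bL)/2) / (C.card:ℝ) =
          ((x k + bL/2) - 0)/(C.card : ℝ) + ((1:ℝ) - ((x k - aL/2) + 1))/(C.card : ℝ) := by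
        rw [← add_div]; ring_nf
      rw [he]
      exact add_le_add hseg1 hseg2
  have hM2 : maxGap x / 2 ≤ ((aL + bL)/2)/C.card := by
    have h1 : maxGap x ≤ (aL + bL)/C.card := by
      rw [le_div_iff₀ hcardR, mul_comm]; exact hmb
    calc maxGap x / 2 ≤ ((aL + bL)/C.card)/2 := by linarith
      _ = ((aL + bL)/2)/C.card := by ring
  rw [hprofit]
  exact le_trans hM2 htarget
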